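/- Let (X,d) be a complete CAT(0) space and let S be the barycentric subdivision operator for a nonnegative mask a satisfying the basic sum rule, i.e. (Sx)_i = argmin_z ∑_j a(i − 2j) d(x_j, z)². Then for all n ≥ 1, all i ∈ ℤ^s, all z₀ ∈ X, and all bounded x : ℤ^s → X: d((Sⁿx)_i, z₀) ≤ ∑_k a⁽ⁿ⁾(i − 2ⁿ k) d(x_k, z₀), where a⁽ⁿ⁾ are the iterated masks. -/

import Mathlib

private lemma inj_aff (s : ℕ) (m : ℕ) (hm : m ≠ 0) (i : Fin s → ℤ) :
    Function.Injective (fun j : Fin s → ℤ => i - m • j) := by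
  intro j j' h
  have h2 : m • j = m • j' := by
    have h' : i - m • j = i - m • j' := h
    have := congrArg (fun u => u - (i - m • j)) h'
    simpa using (sub_right_injective h')
  funext t
  have ht := congrFun h2 t
  simp only [Pi.smul_apply, nsmul_eq_mul] at ht
  have hm' : (m : ℤ) ≠ 0 := Int.natCast_ne_zero.2 hm
  exact mul_left_cancel₀ hm' ht

private lemma pre_fin {s : ℕ} (g : (Fin s → ℤ) → ℝ) (hg : (Function.support g).Finite)
    (m : ℕ) (hm : m ≠ 0) (i : Fin s → ℤ) :
    (Function.support fun j : Fin s → ℤ => g (i - m • j)).Finite := by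
  have h := hg.preimage ((inj_aff s m hm i).injOn)
  exact h.subset (fun j hj => hj)

private lemma finsum_pre_eq {s : ℕ} (g : (Fin s → ℤ) → ℝ) (hg : (Function.support g).Finite)
    (m : ℕ) (hm : m ≠ 0) (i : Fin s → ℤ) (d : (Fin s → ℤ) → ℝ) :
    ∑ᶠ j : Fin s → ℤ, g (i - m • j) * d j
      = ∑ j ∈ (pre_fin g hg m hm i).toFinset, g (i - m • j) * d j := by
  apply finsum_eq_sum_of_support_subset
  intro j hj
  simp only [Function.mem_support] at hj
  simp only [Finset.coe_sort_coe, Set.Finite.coe_toFinset, Function.mem_support]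
  intro h
  exact hj (by rw [h, zero_mul])

private lemma onestep {s : ℕ} {X : Type*} [MetricSpace X]
    (hHad : ∀ x₀ x₁ : X, ∃ y : X, ∀ z : X,
      dist z y ^ 2 ≤ (1 / 2) * dist z x₀ ^ 2 + (1 / 2) * dist z x₁ ^ 2
        - (1 / 4) * dist x₀ x₁ ^ 2)
    (a : (Fin s → ℤ) → ℝ)
    (ha_nonneg : ∀ i, 0 ≤ a i)
    (ha_fin : (Function.support a).Finite)
    (ha_sum : ∀ i : Fin s → ℤ, ∑ᶠ j : Fin s → ℤ, a (i - 2 • j) = 1)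
    (S : ((Fin s → ℤ) → X) → ((Fin s → ℤ) → X))
    (hS : ∀ (x : (Fin s → ℤ) → X) (i : Fin s → ℤ) (z : X),
      ∑ᶠ j : Fin s → ℤ, a (i - 2 • j) * dist (x j) (S x i) ^ 2 ≤
        ∑ᶠ j : Fin s → ℤ, a (i - 2 • j) * dist (x j) z ^ 2)
    (x : (Fin s → ℤ) → X) (i : Fin s → ℤ) (z₀ : X) :
    dist (S x i) z₀ ≤ ∑ᶠ j : Fin s → ℤ, a (i - 2 • j) * dist (x j) z₀ := by
  classical
  set b := S x i with hb
  set D := dist b z₀ with hD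
  set F : Finset (Fin s → ℤ) := (pre_fin a ha_fin 2 two_ne_zero i).toFinset with hF
  have hsum_fin : ∀ g : (Fin s → ℤ) → ℝ,
      ∑ᶠ j : Fin s → ℤ, a (i - 2 • j) * g j = ∑ j ∈ F, a (i - 2 • j) * g j :=
    fun g => finsum_pre_eq a ha_fin 2 two_ne_zero i g
  have hw1 : ∑ j ∈ F, a (i - 2 • j) = 1 := by
    have := hsum_fin (fun _ => 1)
    simp only [mul_one] at this
    rw [← this, ha_sum i]
  set fs : X → ℝ := fun z => ∑ j ∈ F, a (i - 2 • j) * dist (x j) z ^ 2 with hfs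
  have hmin : ∀ z, fs b ≤ fs z := by
    intro z
    have := hS x i z
    rwa [hsum_fin (fun j => dist (x j) (S x i) ^ 2),
      hsum_fin (fun j => dist (x j) z ^ 2)] at this
  obtain ⟨m, hm⟩ : ∃ m : X → X, ∀ p z, dist z (m p) ^ 2 ≤
      (1/2) * dist z b ^ 2 + (1/2) * dist z p ^ 2 - (1/4) * dist b p ^ 2 := by
    choose m hm using fun p => hHad b p
    exact ⟨m, hm⟩
  set zz : ℕ → X := fun k => m^[k] z₀ with hzz
  have hzz0 : zz 0 = z₀ := rfl
  have hzzsucc : ∀ k, zz (k+1) = m (zz k) := fun k => Function.iterate_succ_apply' m k z₀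
  have hdist : ∀ k, dist b (zz k) = D / 2 ^ k := by
    intro k; induction k with
    | zero => simp [hzz0, hD]
    | succ k ih =>
      have h1 : dist b (zz (k+1)) ^ 2 ≤ (1/4) * dist b (zz k) ^ 2 := by
        have h := hm (zz k) b
        rw [← hzzsucc k] at h
        simp only [dist_self] at h
        nlinarith [h]
      have h2 : dist (zz k) (zz (k+1)) ^ 2 ≤ (1/4) * dist b (zz k) ^ 2 := by
        have h := hm (zz k) (zz k)
        rw [← hzzsucc k] at h
        simp only [dist_self] at h
        rw [dist_comm (zz k) b] at h
        nlinarith [h]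
      have hle : dist b (zz (k+1)) ≤ dist b (zz k) / 2 := by
        nlinarith [dist_nonneg (x := b) (y := zz (k+1)), dist_nonneg (x := b) (y := zz k)]
      have hge : dist b (zz k) / 2 ≤ dist b (zz (k+1)) := by
        have htri : dist b (zz k) ≤ dist b (zz (k+1)) + dist (zz (k+1)) (zz k) :=
          dist_triangle _ _ _
        have h2' : dist (zz (k+1)) (zz k) ≤ dist b (zz k) / 2 := by
          rw [dist_comm]
          nlinarith [dist_nonneg (x := zz k) (y := zz (k+1)), dist_nonneg (x := b) (y := zz k)]
        linarith
      have : dist b (zz (k+1)) = dist b (zz k) / 2 := le_antisymm hle hge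
      rw [this, ih, pow_succ]
      ring
  have hstep : ∀ k, fs (zz (k+1)) ≤
      (1/2) * fs b + (1/2) * fs (zz k) - (1/4) * (D / 2 ^ k) ^ 2 := by
    intro k
    have hterm : ∀ j ∈ F, a (i - 2 • j) * dist (x j) (zz (k+1)) ^ 2 ≤
        a (i - 2 • j) * ((1/2) * dist (x j) b ^ 2 + (1/2) * dist (x j) (zz k) ^ 2
          - (1/4) * dist b (zz k) ^ 2) := by
      intro j _
      refine mul_le_mul_of_nonneg_left ?_ (ha_nonneg _)
      rw [hzzsucc]
      exact hm (zz k) (x j)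
    calc fs (zz (k+1)) ≤ ∑ j ∈ F, a (i - 2 • j) * ((1/2) * dist (x j) b ^ 2
          + (1/2) * dist (x j) (zz k) ^ 2 - (1/4) * dist b (zz k) ^ 2) :=
        Finset.sum_le_sum hterm
      _ = ∑ j ∈ F, ((1/2) * (a (i - 2 • j) * dist (x j) b ^ 2)
          + (1/2) * (a (i - 2 • j) * dist (x j) (zz k) ^ 2)
          - ((1/4) * dist b (zz k) ^ 2) * a (i - 2 • j)) :=
        Finset.sum_congr rfl (fun j _ => by ring)
      _ = (1/2) * fs b + (1/2) * fs (zz k)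
          - ((1/4) * dist b (zz k) ^ 2) * ∑ j ∈ F, a (i - 2 • j) := by
        rw [Finset.sum_sub_distrib, Finset.sum_add_distrib, ← Finset.mul_sum,
          ← Finset.mul_sum, ← Finset.mul_sum]
      _ = (1/2) * fs b + (1/2) * fs (zz k) - (1/4) * (D / 2 ^ k) ^ 2 := by
        rw [hw1, hdist k]; ring
  have hiter : ∀ k, (2:ℝ) ^ k * (fs (zz k) - fs b)
      ≤ (fs z₀ - fs b) - (1 - (1/2:ℝ) ^ k) * D ^ 2 := by
    intro k; induction k with
    | zero => simp [hzz0]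
    | succ k ih =>
      have h1 := hstep k
      have h2 : (0:ℝ) < 2 ^ k := by positivity
      have e1 : (2:ℝ) ^ (k+1) * (((1/2) * fs b + (1/2) * fs (zz k)
            - (1/4) * (D / 2 ^ k) ^ 2) - fs b)
          = 2 ^ k * (fs (zz k) - fs b) - (1/2) * (1/2:ℝ) ^ k * D ^ 2 := by
        have hne : ((2:ℝ) ^ k) ≠ 0 := ne_of_gt h2
        rw [one_div_pow]
        field_simp
        ring
      calc (2:ℝ) ^ (k+1) * (fs (zz (k+1)) - fs b)
          ≤ (2:ℝ) ^ (k+1) * (((1/2) * fs b + (1/2) * fs (zz k)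
              - (1/4) * (D / 2 ^ k) ^ 2) - fs b) := by
            apply mul_le_mul_of_nonneg_left (by linarith) (by positivity)
        _ = 2 ^ k * (fs (zz k) - fs b) - (1/2) * (1/2:ℝ) ^ k * D ^ 2 := e1
        _ ≤ ((fs z₀ - fs b) - (1 - (1/2:ℝ) ^ k) * D ^ 2)
              - (1/2) * (1/2:ℝ) ^ k * D ^ 2 := by linarith
        _ = (fs z₀ - fs b) - (1 - (1/2:ℝ) ^ (k+1)) * D ^ 2 := by
            rw [pow_succ]; ring
  have hbound : ∀ k, (1 - (1/2:ℝ) ^ k) * D ^ 2 ≤ fs z₀ - fs b := by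
    intro k
    have h1 := hiter k
    have h2 : fs b ≤ fs (zz k) := hmin (zz k)
    have h3 : (0:ℝ) < 2 ^ k := by positivity
    nlinarith
  have hvar : D ^ 2 ≤ fs z₀ - fs b := by
    have ht : Filter.Tendsto (fun k : ℕ => (1 - (1/2:ℝ) ^ k) * D ^ 2)
        Filter.atTop (nhds ((1 - 0) * D ^ 2)) :=
      (tendsto_const_nhds.sub
        (tendsto_pow_atTop_nhds_zero_of_lt_one (by norm_num) (by norm_num))).mul_const _
    have := le_of_tendsto' ht hbound
    simpa using this
  -- Jensen conclusion
  rw [hsum_fin (fun j => dist (x j) z₀)]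
  have hterm : ∀ j ∈ F, a (i - 2 • j) * (dist (x j) z₀ ^ 2 - dist (x j) b ^ 2)
      ≤ a (i - 2 • j) * (2 * D * dist (x j) z₀ - D ^ 2) := by
    intro j _
    refine mul_le_mul_of_nonneg_left ?_ (ha_nonneg _)
    have t1 : D ≤ dist b (x j) + dist (x j) z₀ := dist_triangle _ _ _
    have t2 : dist (x j) z₀ ≤ dist (x j) b + D := dist_triangle _ _ _
    rw [dist_comm b (x j)] at t1
    have h₁ : 0 ≤ dist (x j) b + dist (x j) z₀ - D := by linarith
    have h₂ : 0 ≤ dist (x j) b + D - dist (x j) z₀ := by linarith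
    nlinarith [mul_nonneg h₁ h₂]
  have hchain : D ^ 2 ≤ 2 * D * (∑ j ∈ F, a (i - 2 • j) * dist (x j) z₀) - D ^ 2 := by
    calc D ^ 2 ≤ fs z₀ - fs b := hvar
      _ = ∑ j ∈ F, a (i - 2 • j) * (dist (x j) z₀ ^ 2 - dist (x j) b ^ 2) := by
        rw [hfs]
        rw [← Finset.sum_sub_distrib]
        exact Finset.sum_congr rfl (fun j _ => by ring)
      _ ≤ ∑ j ∈ F, a (i - 2 • j) * (2 * D * dist (x j) z₀ - D ^ 2) :=
        Finset.sum_le_sum hterm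
      _ = ∑ j ∈ F, ((2 * D) * (a (i - 2 • j) * dist (x j) z₀)
            - D ^ 2 * a (i - 2 • j)) :=
        Finset.sum_congr rfl (fun j _ => by ring)
      _ = (2 * D) * (∑ j ∈ F, a (i - 2 • j) * dist (x j) z₀)
            - D ^ 2 * ∑ j ∈ F, a (i - 2 • j) := by
        rw [Finset.sum_sub_distrib, ← Finset.mul_sum, ← Finset.mul_sum]
      _ = 2 * D * (∑ j ∈ F, a (i - 2 • j) * dist (x j) z₀) - D ^ 2 := by
        rw [hw1]; ring
  have hTnonneg : 0 ≤ ∑ j ∈ F, a (i - 2 • j) * dist (x j) z₀ :=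
    Finset.sum_nonneg (fun j _ => mul_nonneg (ha_nonneg _) dist_nonneg)
  rcases eq_or_lt_of_le (dist_nonneg (x := b) (y := z₀)) with h | h
  · have hD0 : D = 0 := by rw [hD, ← h]
    rw [hD0]; exact hTnonneg
  · have hD0 : 0 < D := by rw [hD]; exact h
    nlinarith

private lemma A_fin {s : ℕ} (a : (Fin s → ℤ) → ℝ) (ha_fin : (Function.support a).Finite)
    (A : ℕ → (Fin s → ℤ) → ℝ) (hA1 : A 1 = a)
    (hAsucc : ∀ n (i : Fin s → ℤ),
      A (n + 1) i = ∑ᶠ j : Fin s → ℤ, a (i - 2 • j) * A n j) :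
    ∀ n, 1 ≤ n → (Function.support (A n)).Finite := by
  intro n hn
  induction n, hn using Nat.le_induction with
  | base => rw [hA1]; exact ha_fin
  | succ n hn ih =>
    have hsub : Function.support (A (n+1)) ⊆
        (fun p : ((Fin s → ℤ) × (Fin s → ℤ)) => p.1 + 2 • p.2) ''
          ((Function.support a) ×ˢ (Function.support (A n))) := by
      intro i hi
      rw [Function.mem_support, hAsucc] at hi
      obtain ⟨j, hj⟩ : ∃ j, a (i - 2 • j) * A n j ≠ 0 := by
        by_contra h
        push_neg at h
        exact hi (finsum_eq_zero_of_forall_eq_zero h)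
      refine ⟨(i - 2 • j, j), ⟨?_, ?_⟩, by simp⟩
      · exact fun h => hj (by rw [h, zero_mul])
      · exact fun h => hj (by rw [h, mul_zero])
    exact ((ha_fin.prod ih).image _).subset hsub

/-- Jensen inequality for the iterates of a barycentric subdivision
scheme on a complete CAT(0) (Hadamard) space:
`d((Sⁿx)_i, z₀) ≤ ∑ₖ a⁽ⁿ⁾(i - 2ⁿk) d(xₖ, z₀)`. -/
theorem iterated_scheme_jensen (s : ℕ) (X : Type*) [MetricSpace X]
    [CompleteSpace X]
    (hHad : ∀ x₀ x₁ : X, ∃ y : X, ∀ z : X,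
      dist z y ^ 2 ≤ (1 / 2) * dist z x₀ ^ 2 + (1 / 2) * dist z x₁ ^ 2
        - (1 / 4) * dist x₀ x₁ ^ 2)
    (a : (Fin s → ℤ) → ℝ)
    (ha_nonneg : ∀ i, 0 ≤ a i)
    (ha_fin : (Function.support a).Finite)
    (ha_sum : ∀ i : Fin s → ℤ, ∑ᶠ j : Fin s → ℤ, a (i - 2 • j) = 1)
    (A : ℕ → (Fin s → ℤ) → ℝ)
    (hA1 : A 1 = a)
    (hAsucc : ∀ n (i : Fin s → ℤ),
      A (n + 1) i = ∑ᶠ j : Fin s → ℤ, a (i - 2 • j) * A n j)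
    (S : ((Fin s → ℤ) → X) → ((Fin s → ℤ) → X))
    (hS : ∀ (x : (Fin s → ℤ) → X) (i : Fin s → ℤ) (z : X),
      ∑ᶠ j : Fin s → ℤ, a (i - 2 • j) * dist (x j) (S x i) ^ 2 ≤
        ∑ᶠ j : Fin s → ℤ, a (i - 2 • j) * dist (x j) z ^ 2) :
    ∀ (x : (Fin s → ℤ) → X), (∃ M : ℝ, ∃ x₀ : X, ∀ j, dist (x j) x₀ ≤ M) →
      ∀ (n : ℕ), 1 ≤ n → ∀ (i : Fin s → ℤ) (z₀ : X),
        dist (S^[n] x i) z₀ ≤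
          ∑ᶠ k : Fin s → ℤ, A n (i - 2 ^ n • k) * dist (x k) z₀ := by
  classical
  intro x _hbdd n hn
  induction n, hn using Nat.le_induction with
  | base =>
    intro i z₀
    have h := onestep hHad a ha_nonneg ha_fin ha_sum S hS x i z₀
    simpa [hA1, pow_one] using h
  | succ n hn ih =>
    intro i z₀
    have hAnfin : (Function.support (A n)).Finite := A_fin a ha_fin A hA1 hAsucc n hn
    have h2n : (2:ℕ) ^ n ≠ 0 := pow_ne_zero n two_ne_zero
    set F : Finset (Fin s → ℤ) := (pre_fin a ha_fin 2 two_ne_zero i).toFinset with hF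
    set K : Finset (Fin s → ℤ) :=
      F.biUnion (fun j => (pre_fin (A n) hAnfin (2 ^ n) h2n j).toFinset) with hK
    have hinnerK : ∀ j ∈ F,
        ∑ᶠ k : Fin s → ℤ, A n (j - 2 ^ n • k) * dist (x k) z₀
          = ∑ k ∈ K, A n (j - 2 ^ n • k) * dist (x k) z₀ := by
      intro j hj
      apply finsum_eq_sum_of_support_subset
      intro k hk
      simp only [Function.mem_support] at hk
      have hk' : k ∈ (pre_fin (A n) hAnfin (2 ^ n) h2n j).toFinset := by
        rw [Set.Finite.mem_toFinset, Function.mem_support]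
        intro h
        exact hk (by rw [h, zero_mul])
      exact Finset.mem_coe.2 (Finset.mem_biUnion.2 ⟨j, hj, hk'⟩)
    have hkey : ∀ k : Fin s → ℤ, A (n+1) (i - 2 ^ (n+1) • k)
        = ∑ j ∈ F, a (i - 2 • j) * A n (j - 2 ^ n • k) := by
      intro k
      rw [hAsucc]
      have harg : ∀ j : Fin s → ℤ,
          i - 2 ^ (n+1) • k - 2 • (j - 2 ^ n • k) = i - 2 • j := by
        intro j
        rw [smul_sub, smul_smul, ← pow_succ']
        exact sub_sub_sub_cancel_right _ _ _
      calc ∑ᶠ j : Fin s → ℤ, a (i - 2 ^ (n+1) • k - 2 • j) * A n j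
          = ∑ᶠ j : Fin s → ℤ, a (i - 2 ^ (n+1) • k - 2 • ((Equiv.subRight (2 ^ n • k)) j))
              * A n ((Equiv.subRight (2 ^ n • k)) j) :=
            (finsum_comp_equiv (Equiv.subRight ((2:ℕ) ^ n • k))).symm
        _ = ∑ᶠ j : Fin s → ℤ, a (i - 2 • j) * A n (j - 2 ^ n • k) := by
            refine finsum_congr fun j => ?_
            rw [Equiv.subRight_apply, harg j]
        _ = ∑ j ∈ F, a (i - 2 • j) * A n (j - 2 ^ n • k) :=
            finsum_pre_eq a ha_fin 2 two_ne_zero i _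
    calc dist (S^[n+1] x i) z₀
        = dist (S (S^[n] x) i) z₀ := by rw [Function.iterate_succ_apply']
      _ ≤ ∑ᶠ j : Fin s → ℤ, a (i - 2 • j) * dist (S^[n] x j) z₀ :=
          onestep hHad a ha_nonneg ha_fin ha_sum S hS (S^[n] x) i z₀
      _ = ∑ j ∈ F, a (i - 2 • j) * dist (S^[n] x j) z₀ :=
          finsum_pre_eq a ha_fin 2 two_ne_zero i _
      _ ≤ ∑ j ∈ F, a (i - 2 • j) * (∑ k ∈ K, A n (j - 2 ^ n • k) * dist (x k) z₀) := by
          refine Finset.sum_le_sum fun j hj => ?_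
          refine mul_le_mul_of_nonneg_left ?_ (ha_nonneg _)
          rw [← hinnerK j hj]
          exact ih j z₀
      _ = ∑ j ∈ F, ∑ k ∈ K, a (i - 2 • j) * (A n (j - 2 ^ n • k) * dist (x k) z₀) :=
          Finset.sum_congr rfl fun j _ => Finset.mul_sum _ _ _
      _ = ∑ k ∈ K, ∑ j ∈ F, a (i - 2 • j) * (A n (j - 2 ^ n • k) * dist (x k) z₀) :=
          Finset.sum_comm
      _ = ∑ k ∈ K, (∑ j ∈ F, a (i - 2 • j) * A n (j - 2 ^ n • k)) * dist (x k) z₀ := by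
          refine Finset.sum_congr rfl fun k _ => ?_
          rw [Finset.sum_mul]
          exact Finset.sum_congr rfl fun j _ => (mul_assoc _ _ _).symm
      _ = ∑ k ∈ K, A (n+1) (i - 2 ^ (n+1) • k) * dist (x k) z₀ :=
          Finset.sum_congr rfl (fun k _ => by rw [hkey k])
      _ = ∑ᶠ k : Fin s → ℤ, A (n+1) (i - 2 ^ (n+1) • k) * dist (x k) z₀ := by
          symm
          apply finsum_eq_sum_of_support_subset
          intro k hk
          simp only [Function.mem_support] at hk
          have hA0 : A (n+1) (i - 2 ^ (n+1) • k) ≠ 0 := fun h => hk (by rw [h, zero_mul])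
          rw [hkey k] at hA0
          obtain ⟨j, hjF, hjne⟩ := Finset.exists_ne_zero_of_sum_ne_zero hA0
          have hk' : k ∈ (pre_fin (A n) hAnfin (2 ^ n) h2n j).toFinset := by
            rw [Set.Finite.mem_toFinset, Function.mem_support]
            intro h
            exact hjne (by rw [h, mul_zero])
          exact Finset.mem_coe.2 (Finset.mem_biUnion.2 ⟨j, hjF, hk'⟩)
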